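/- For U_t = exp(-ι·t·H(K_n^-)), the (1,1) entry equals n⁻¹·( (n/2)·e^{-ι(C-2n+3)t} + e^{-ι(C-1)t} + (n/2 - 1)·e^{-ι(n(n-5)/2 - 1)t} ) where C = n(n-1)/2, and the (1,n) entry equals n⁻¹·( e^{-ι(C-1)t} - (n/2)·e^{-ι(C-2n+3)t} + (n/2 - 1)·e^{-ι(n(n-5)/2 - 1)t} ). -/

import Mathlib

open NormedSpace

set_option maxHeartbeats 1000000 in
lemma exp_smul_idem {𝔸 : Type*} [NormedRing 𝔸] [NormedAlgebra ℂ 𝔸] [CompleteSpace 𝔸]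
    (Q : 𝔸) (hQ : Q * Q = Q) (c : ℂ) :
    exp (c • Q) = 1 + (Complex.exp c - 1) • Q := by
  have hpow : ∀ k : ℕ, Q ^ (k + 1) = Q := by
    intro k
    induction k with
    | zero => simp
    | succ k ih => rw [pow_succ, ih, hQ]
  have hsum : Summable fun k : ℕ => ((Nat.factorial k : ℂ))⁻¹ • (c • Q) ^ k :=
    expSeries_summable' (𝕂 := ℂ) (c • Q)
  have hsumC : Summable fun k : ℕ => ((Nat.factorial k : ℂ))⁻¹ * c ^ k := by
    simpa [smul_eq_mul] using expSeries_summable' (𝕂 := ℂ) c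
  have hsumC' : Summable fun k : ℕ => ((Nat.factorial (k+1) : ℂ))⁻¹ * c ^ (k + 1) :=
    (summable_nat_add_iff 1).mpr hsumC
  rw [exp_eq_tsum ℂ]
  simp only []
  rw [Summable.tsum_eq_zero_add hsum]
  have h1 : ∀ k : ℕ, ((Nat.factorial (k+1) : ℂ))⁻¹ • (c • Q) ^ (k + 1)
      = (((Nat.factorial (k+1) : ℂ))⁻¹ * c ^ (k + 1)) • Q := by
    intro k
    rw [smul_pow, hpow, smul_smul]
  simp_rw [h1]
  rw [Summable.tsum_smul_const hsumC']
  have hec : (∑' k : ℕ, ((Nat.factorial (k+1) : ℂ))⁻¹ * c ^ (k + 1)) = Complex.exp c - 1 := by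
    have : Complex.exp c = ∑' k : ℕ, ((Nat.factorial k : ℂ))⁻¹ * c ^ k := by
      rw [Complex.exp_eq_exp_ℂ, exp_eq_tsum ℂ]; simp [smul_eq_mul]
    rw [this, Summable.tsum_eq_zero_add hsumC]
    simp
  rw [hec]
  simp

lemma matrix_exp_smul_idem {m : Type*} [Fintype m] [DecidableEq m]
    (Q : Matrix m m ℂ) (hQ : Q * Q = Q) (c : ℂ) :
    exp (c • Q) = 1 + (Complex.exp c - 1) • Q := by
  letI : SeminormedRing (Matrix m m ℂ) := Matrix.linftyOpSemiNormedRing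
  letI : NormedRing (Matrix m m ℂ) := Matrix.linftyOpNormedRing
  letI : NormedAlgebra ℂ (Matrix m m ℂ) := Matrix.linftyOpNormedAlgebra
  exact exp_smul_idem Q hQ c

set_option maxHeartbeats 1000000 in
/-- For `U_t = exp(-ιtH(K_n^-))` (with `n` even, `n ≥ 4`, vertices `a`, `b`
the endpoints of the missing edge, and `C = n(n-1)/2`), the `(a,a)` entry equals
`n⁻¹((n/2)e^{-ι(C-2n+3)t} + e^{-ι(C-1)t} + (n/2-1)e^{-ι(n(n-5)/2-1)t})` and the
`(a,b)` entry equals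
`n⁻¹(e^{-ι(C-1)t} - (n/2)e^{-ι(C-2n+3)t} + (n/2-1)e^{-ι(n(n-5)/2-1)t})`. -/
theorem complete_minus_edge_evolution_entries (n : ℕ) (hn : 4 ≤ n) (heven : Even n)
    (t : ℝ) (a b : Fin n) (ha : (a : ℕ) = 0) (hb : (b : ℕ) = n - 1)
    (P : Matrix (Fin n) (Fin n) ℂ)
    (hP : P = Matrix.of fun i j =>
      if (i = a ∧ j = a) ∨ (i = b ∧ j = b) then 1
      else if (i = a ∧ j = b) ∨ (i = b ∧ j = a) then -1 else 0)
    (H : Matrix (Fin n) (Fin n) ℂ)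
    (hH : H = (n * (n - 1) / 2 - 1 : ℂ) • (1 : Matrix (Fin n) (Fin n) ℂ)
        - 2 • ((n : ℂ) • (1 : Matrix (Fin n) (Fin n) ℂ)
            - (Matrix.of fun _ _ : Fin n => (1 : ℂ)) - P))
    (U : Matrix (Fin n) (Fin n) ℂ)
    (hU : U = NormedSpace.exp ((-(Complex.I * t)) • H))
    (C : ℂ) (hC : C = n * (n - 1) / 2) :
    U a a = (n : ℂ)⁻¹ * ((n / 2) * Complex.exp (-(Complex.I) * ((C - 2 * n + 3) * t))
        + Complex.exp (-(Complex.I) * ((C - 1) * t))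
        + (n / 2 - 1) * Complex.exp (-(Complex.I) * ((n * (n - 5) / 2 - 1) * t))) ∧
    U a b = (n : ℂ)⁻¹ * (Complex.exp (-(Complex.I) * ((C - 1) * t))
        - (n / 2) * Complex.exp (-(Complex.I) * ((C - 2 * n + 3) * t))
        + (n / 2 - 1) * Complex.exp (-(Complex.I) * ((n * (n - 5) / 2 - 1) * t))) := by
  have hn0 : (n : ℂ) ≠ 0 := by
    have : (0:ℕ) < n := by omega
    exact_mod_cast Nat.cast_ne_zero.mpr (by omega)
  have hab : a ≠ b := by
    intro h
    apply_fun (Fin.val) at h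
    omega
  set s : ℂ := -(Complex.I * t) with hs
  set J : Matrix (Fin n) (Fin n) ℂ := Matrix.of (fun _ _ : Fin n => (1 : ℂ)) with hJ
  -- vector form of P
  set v : Fin n → ℂ := fun i => if i = a then 1 else if i = b then -1 else 0 with hv
  have hPv : P = Matrix.of fun i j => v i * v j := by
    rw [hP]
    ext i j
    simp only [Matrix.of_apply, hv]
    by_cases hia : i = a <;> by_cases hib : i = b <;>
      by_cases hja : j = a <;> by_cases hjb : j = b <;>
      simp_all <;> ring_nf <;> simp_all
  have hvsplit : ∀ k : Fin n, v k = (if k = a then (1:ℂ) else 0) + (if k = b then (-1:ℂ) else 0) := by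
    intro k
    simp only [hv]
    by_cases h1 : k = a <;> by_cases h2 : k = b <;> simp_all
  have hv2split : ∀ k : Fin n, v k * v k = (if k = a then (1:ℂ) else 0) + (if k = b then (1:ℂ) else 0) := by
    intro k
    simp only [hv]
    by_cases h1 : k = a <;> by_cases h2 : k = b <;> simp_all
  have hsumv : (∑ k : Fin n, v k) = 0 := by
    simp only [hvsplit]
    rw [Finset.sum_add_distrib, Finset.sum_ite_eq' Finset.univ a (fun _ => (1:ℂ)),
        Finset.sum_ite_eq' Finset.univ b (fun _ => (-1:ℂ))]
    simp
  have hsumv2 : (∑ k : Fin n, v k * v k) = 2 := by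
    simp only [hv2split]
    rw [Finset.sum_add_distrib, Finset.sum_ite_eq' Finset.univ a (fun _ => (1:ℂ)),
        Finset.sum_ite_eq' Finset.univ b (fun _ => (1:ℂ))]
    norm_num
  have hJJ : J * J = (n : ℂ) • J := by
    ext i j
    simp [hJ, Matrix.mul_apply]
  have hPP : P * P = (2 : ℂ) • P := by
    rw [hPv]
    ext i j
    simp only [Matrix.mul_apply, Matrix.of_apply, Matrix.smul_apply, smul_eq_mul]
    calc (∑ k : Fin n, (v i * v k) * (v k * v j))
        = (∑ k : Fin n, (v k * v k) * (v i * v j)) :=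
          Finset.sum_congr rfl fun k _ => by ring
      _ = (∑ k : Fin n, v k * v k) * (v i * v j) := by rw [Finset.sum_mul]
      _ = 2 * (v i * v j) := by rw [hsumv2]
  have hJP : J * P = 0 := by
    rw [hPv]
    ext i j
    simp only [Matrix.mul_apply, Matrix.of_apply, Matrix.zero_apply, hJ, one_mul]
    rw [← Finset.sum_mul, hsumv, zero_mul]
  have hPJ : P * J = 0 := by
    rw [hPv]
    ext i j
    simp only [Matrix.mul_apply, Matrix.of_apply, Matrix.zero_apply, hJ, mul_one]
    rw [← Finset.mul_sum, hsumv, mul_zero]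
  -- decompose s • H
  set c : ℂ := s * (n * (n - 1) / 2 - 1) - 2 * s * n with hc
  have hsH : s • H = c • (1 : Matrix (Fin n) (Fin n) ℂ) + ((2*s*(n:ℂ)) • ((n:ℂ)⁻¹ • J) + (4*s) • ((2:ℂ)⁻¹ • P)) := by
    rw [hH, hc]
    rw [smul_smul, smul_smul]
    have h2n : 2*s*(n:ℂ) * (n:ℂ)⁻¹ = 2*s := by
      field_simp
    have h42 : (4*s) * (2:ℂ)⁻¹ = 2*s := by ring
    rw [h2n, h42]
    module
  -- exponentials
  have hQJ : ((n:ℂ)⁻¹ • J) * ((n:ℂ)⁻¹ • J) = (n:ℂ)⁻¹ • J := by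
    rw [Matrix.smul_mul, Matrix.mul_smul, hJJ, smul_smul, smul_smul]
    congr 1
    field_simp
  have hQP : ((2:ℂ)⁻¹ • P) * ((2:ℂ)⁻¹ • P) = (2:ℂ)⁻¹ • P := by
    rw [Matrix.smul_mul, Matrix.mul_smul, hPP, smul_smul, smul_smul]
    congr 1
    norm_num
  have hcomm1 : Commute (c • (1 : Matrix (Fin n) (Fin n) ℂ))
      ((2*s*(n:ℂ)) • ((n:ℂ)⁻¹ • J) + (4*s) • ((2:ℂ)⁻¹ • P)) := by
    unfold Commute SemiconjBy
    simp [Matrix.smul_mul, Matrix.mul_smul, Matrix.add_mul, Matrix.mul_add]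
  have hcomm2 : Commute ((2*s*(n:ℂ)) • ((n:ℂ)⁻¹ • J)) ((4*s) • ((2:ℂ)⁻¹ • P)) := by
    unfold Commute SemiconjBy
    simp [Matrix.smul_mul, Matrix.mul_smul, hJP, hPJ]
  have hUeq : U = Complex.exp c •
      ((1 : Matrix (Fin n) (Fin n) ℂ) + (Complex.exp (2*s*(n:ℂ)) - 1) • ((n:ℂ)⁻¹ • J)
        + (Complex.exp (4*s) - 1) • ((2:ℂ)⁻¹ • P)) := by
    rw [hU, hsH, Matrix.exp_add_of_commute _ _ hcomm1,
        Matrix.exp_add_of_commute _ _ hcomm2]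
    rw [matrix_exp_smul_idem _ (one_mul (1 : Matrix (Fin n) (Fin n) ℂ)) c,
        matrix_exp_smul_idem _ hQJ (2*s*(n:ℂ)), matrix_exp_smul_idem _ hQP (4*s)]
    have hJPQ : ((n:ℂ)⁻¹ • J) * ((2:ℂ)⁻¹ • P) = 0 := by
      rw [Matrix.smul_mul, Matrix.mul_smul, hJP]
      simp
    have h1e : (1 + (Complex.exp c - 1) • (1 : Matrix (Fin n) (Fin n) ℂ)) = Complex.exp c • 1 := by
      rw [sub_smul, one_smul]
      abel
    rw [h1e]
    have hexpand : ((1 : Matrix (Fin n) (Fin n) ℂ) + (Complex.exp (2*s*(n:ℂ)) - 1) • ((n:ℂ)⁻¹ • J))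
        * ((1 : Matrix (Fin n) (Fin n) ℂ) + (Complex.exp (4*s) - 1) • ((2:ℂ)⁻¹ • P))
        = 1 + (Complex.exp (2*s*(n:ℂ)) - 1) • ((n:ℂ)⁻¹ • J)
          + (Complex.exp (4*s) - 1) • ((2:ℂ)⁻¹ • P) := by
      simp only [mul_add, add_mul, mul_one, one_mul, Matrix.smul_mul, Matrix.mul_smul, hJP,
        smul_zero, add_zero]
      try abel
    rw [hexpand, Matrix.smul_mul, one_mul]
  -- entries
  have hUaa : U a a = Complex.exp c * (1 + (Complex.exp (2*s*(n:ℂ)) - 1) * (n:ℂ)⁻¹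
      + (Complex.exp (4*s) - 1) * (2:ℂ)⁻¹) := by
    rw [hUeq, hP]
    simp [Matrix.one_apply, hJ]
    try ring
  have hUab : U a b = Complex.exp c * ((Complex.exp (2*s*(n:ℂ)) - 1) * (n:ℂ)⁻¹
      - (Complex.exp (4*s) - 1) * (2:ℂ)⁻¹) := by
    rw [hUeq, hP]
    simp [Matrix.one_apply, hJ, hab, hab.symm]
    try ring
  have h1 : (-(Complex.I) * ((C - 2 * (n:ℂ) + 3) * (t:ℂ))) = c + 4*s := by
    rw [hC, hc, hs]; ring
  have h2 : (-(Complex.I) * ((C - 1) * (t:ℂ))) = c + 2*s*(n:ℂ) := by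
    rw [hC, hc, hs]; ring
  have h3 : (-(Complex.I) * (((n:ℂ) * ((n:ℂ) - 5) / 2 - 1) * (t:ℂ))) = c := by
    rw [hc, hs]; ring
  constructor
  · rw [hUaa, h1, h2, h3, Complex.exp_add, Complex.exp_add]
    field_simp
    ring
  · rw [hUab, h1, h2, h3, Complex.exp_add, Complex.exp_add]
    field_simp
    ring
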